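/- RotatE-Box models inversion: Let c, c' : Fin k → ℂ satisfy ‖c j‖ = 1 and c' j = conj(c j) for every index j. Then for all entities e1, e2, the point e2 is inside the query box of e1 and the zero-offset box (c, 0) if and only if e1 is inside the query box of e2 and the zero-offset box (c', 0). -/

import Mathlib

/-- A point `v` is inside the box with center `c` and offset `o`. -/
def insideBox {k : ℕ} (c o v : Fin k → ℂ) : Prop :=
  ∀ j, (c j).re - (o j).re ≤ (v j).re ∧ (v j).re ≤ (c j).re + (o j).re ∧
       (c j).im - (o j).im ≤ (v j).im ∧ (v j).im ≤ (c j).im + (o j).im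

/-- Componentwise (Hadamard) product. -/
def hadamard {k : ℕ} (u w : Fin k → ℂ) : Fin k → ℂ := fun j => u j * w j

lemma insideBox_zero_iff {k : ℕ} (c v : Fin k → ℂ) :
    insideBox c 0 v ↔ ∀ j, v j = c j := by
  unfold insideBox
  constructor
  · intro h j
    obtain ⟨h1, h2, h3, h4⟩ := h j
    simp only [Pi.zero_apply, Complex.zero_re, Complex.zero_im, sub_zero, add_zero] at *
    exact Complex.ext (le_antisymm h2 h1) (le_antisymm h4 h3)
  · intro h j
    simp [h j]

theorem rotate_box_models_inversion {k : ℕ} (c c' : Fin k → ℂ)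
    (hc : ∀ j, ‖c j‖ = 1) (hc' : ∀ j, c' j = starRingEnd ℂ (c j))
    (e1 e2 : Fin k → ℂ) :
    insideBox (hadamard e1 c) 0 e2 ↔ insideBox (hadamard e2 c') 0 e1 := by
  rw [insideBox_zero_iff, insideBox_zero_iff]
  have key : ∀ j, c j * starRingEnd ℂ (c j) = 1 := by
    intro j
    rw [Complex.mul_conj]
    norm_cast
    rw [← Complex.sq_norm, hc j, one_pow]
  unfold hadamard
  constructor
  · intro h j
    rw [h j, hc' j, mul_assoc, key j, mul_one]
  · intro h j
    rw [h j, hc' j, mul_assoc, ← Complex.normSq_eq_conj_mul_self]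
    have := key j
    rw [Complex.mul_conj] at this
    rw [this, mul_one]
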